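/- (Loop removal) If y ∈ Y(x) is a minimizing path (J(y) = min over Y(x)) and y_k = y_m for some k < m, then removing the loop does not change the cost: J(y) = J(y_0, ..., y_k, y_{m+1}, y_{m+2}, ...). -/

import Mathlib

open scoped BigOperators

/-- Cost of the finite path `y 0, ..., y t`. -/
noncomputable def pathCost {X : Type*} (K : X → X → ℝ) (q : X → ℝ) (y : ℕ → X) (t : ℕ) : ℝ :=
  (∑ k ∈ Finset.range t, K (y k) (y (k + 1))) + q (y t)

/-- Expected cost of an infinite path with per-step termination probability `p`:
`J(y) = ∑_{t=1}^∞ (1-p)^{t-1} p · Cost(y_0,...,y_t)`. -/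
noncomputable def Jcost {X : Type*} (K : X → X → ℝ) (q : X → ℝ) (p : ℝ) (y : ℕ → X) : ℝ :=
  ∑' t : ℕ, (1 - p) ^ t * p * pathCost K q y (t + 1)

lemma pathCost_congr {X : Type*} (K : X → X → ℝ) (q : X → ℝ) (u v : ℕ → X) (t : ℕ)
    (h : ∀ j ≤ t, u j = v j) : pathCost K q u t = pathCost K q v t := by
  unfold pathCost
  rw [h t le_rfl]
  congr 1
  apply Finset.sum_congr rfl
  intro j hj
  rw [Finset.mem_range] at hj
  rw [h j (by omega), h (j + 1) (by omega)]

lemma pathCost_split {X : Type*} (K : X → X → ℝ) (q : X → ℝ) (u : ℕ → X) (n t : ℕ) :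
    pathCost K q u (n + t) =
      (∑ j ∈ Finset.range n, K (u j) (u (j + 1))) + pathCost K q (fun s => u (n + s)) t := by
  unfold pathCost
  rw [Finset.sum_range_add]
  simp only [← add_assoc]

lemma pathCost_bound {X : Type*} (K : X → X → ℝ) (q : X → ℝ) (u : ℕ → X) (t : ℕ)
    {C : ℝ} (hK : ∀ a b, |K a b| ≤ C) (hq : ∀ a, |q a| ≤ C) :
    |pathCost K q u t| ≤ (t + 1) * C := by
  unfold pathCost
  calc |(∑ j ∈ Finset.range t, K (u j) (u (j + 1))) + q (u t)|
      ≤ |∑ j ∈ Finset.range t, K (u j) (u (j + 1))| + |q (u t)| := abs_add_le _ _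
    _ ≤ (∑ j ∈ Finset.range t, |K (u j) (u (j + 1))|) + |q (u t)| := by
        gcongr; exact Finset.abs_sum_le_sum_abs _ _
    _ ≤ (∑ _j ∈ Finset.range t, C) + C := by
        gcongr with j hj
        · exact hK _ _
        · exact hq _
    _ = (t + 1) * C := by
        rw [Finset.sum_const, Finset.card_range]
        ring

lemma Jsummable {X : Type*} (K : X → X → ℝ) (q : X → ℝ) {C : ℝ}
    (hK : ∀ a b, |K a b| ≤ C) (hq : ∀ a, |q a| ≤ C) {p : ℝ} (hp : 0 < p) (hp1 : p < 1)
    (u : ℕ → X) : Summable (fun t => (1 - p) ^ t * p * pathCost K q u (t + 1)) := by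
  have hr0 : (0:ℝ) ≤ 1 - p := by linarith
  have hr1 : ‖(1 - p)‖ < 1 := by rw [Real.norm_eq_abs, abs_of_nonneg hr0]; linarith
  have hC : 0 ≤ C := le_trans (abs_nonneg _) (hq (u 0))
  have h1 : Summable (fun t : ℕ => ((t:ℝ) ^ 1 * (1 - p) ^ t) * (p * C)) :=
    (summable_pow_mul_geometric_of_norm_lt_one 1 hr1).mul_right _
  have h2 : Summable (fun t : ℕ => (1 - p) ^ t * (2 * p * C)) :=
    (summable_geometric_of_lt_one hr0 (by linarith)).mul_right _
  apply Summable.of_norm_bounded (h1.add h2)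
  intro t
  have hb := pathCost_bound K q u (t + 1) hK hq
  have hpow : (0:ℝ) ≤ (1 - p) ^ t := pow_nonneg hr0 t
  rw [Real.norm_eq_abs, abs_mul, abs_mul, abs_of_nonneg hpow, abs_of_nonneg hp.le]
  calc (1 - p) ^ t * p * |pathCost K q u (t + 1)|
      ≤ (1 - p) ^ t * p * (((t:ℝ) + 1 + 1) * C) := by
        apply mul_le_mul_of_nonneg_left _ (by positivity)
        simpa [add_assoc] using hb
    _ = (t:ℝ) ^ 1 * (1 - p) ^ t * (p * C) + (1 - p) ^ t * (2 * p * C) := by ring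

lemma Jdecomp {X : Type*} (K : X → X → ℝ) (q : X → ℝ) {C : ℝ}
    (hK : ∀ a b, |K a b| ≤ C) (hq : ∀ a, |q a| ≤ C) {p : ℝ} (hp : 0 < p) (hp1 : p < 1)
    (u : ℕ → X) (n : ℕ) :
    Jcost K q p u = (∑ t ∈ Finset.range n, (1 - p) ^ t * p * pathCost K q u (t + 1)) +
      (1 - p) ^ n * ((∑ j ∈ Finset.range n, K (u j) (u (j + 1))) +
        Jcost K q p (fun s => u (n + s))) := by
  have hs := Jsummable K q hK hq hp hp1 u
  have hr0 : (0:ℝ) ≤ 1 - p := by linarith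
  have hr1 : (1:ℝ) - p < 1 := by linarith
  set B := ∑ j ∈ Finset.range n, K (u j) (u (j + 1)) with hB
  rw [Jcost, ← Summable.sum_add_tsum_nat_add n hs]
  congr 1
  have key : ∀ s : ℕ, (1 - p) ^ (s + n) * p * pathCost K q u (s + n + 1) =
      (1 - p) ^ n * ((1 - p) ^ s * p * B)
      + (1 - p) ^ n * ((1 - p) ^ s * p * pathCost K q (fun s => u (n + s)) (s + 1)) := by
    intro s
    have h' : s + n + 1 = n + (s + 1) := by omega
    rw [h', pathCost_split, pow_add, ← hB]
    ring
  have hsum1 : Summable (fun s : ℕ => (1 - p) ^ n * ((1 - p) ^ s * p * B)) :=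
    (((summable_geometric_of_lt_one hr0 hr1).mul_right (p * B)).mul_left
      ((1 - p) ^ n)).congr (fun s => by ring)
  have hsum2 : Summable
      (fun s : ℕ => (1 - p) ^ n * ((1 - p) ^ s * p * pathCost K q (fun s => u (n + s)) (s + 1))) :=
    (Jsummable K q hK hq hp hp1 (fun s => u (n + s))).mul_left _
  have hgeo : ∑' s : ℕ, (1 - p) ^ s * p * B = B := by
    rw [tsum_congr (fun s => show (1 - p) ^ s * p * B = (1 - p) ^ s * (p * B) by ring),
      tsum_mul_right, tsum_geometric_of_lt_one hr0 hr1,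
      show (1:ℝ) - (1 - p) = p by ring]
    field_simp
  rw [tsum_congr key, Summable.tsum_add hsum1 hsum2, tsum_mul_left, tsum_mul_left, hgeo, Jcost]
  ring

theorem stmt12 {X : Type*} [Fintype X] (N : X → Finset X)
    (K : X → X → ℝ) (q : X → ℝ) (p : ℝ) (hp : 0 < p) (hp1 : p < 1)
    (x : X) (y : ℕ → X) (hy0 : y 0 = x) (hpath : ∀ k, y (k + 1) ∈ N (y k))
    (hmin : ∀ z : ℕ → X, z 0 = x → (∀ k, z (k + 1) ∈ N (z k)) →
      Jcost K q p y ≤ Jcost K q p z)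
    (k m : ℕ) (hkm : k < m) (heq : y k = y m) :
    Jcost K q p y = Jcost K q p (fun n => if n ≤ k then y n else y (n + (m - k))) := by
  -- bounds on K and q
  obtain ⟨C1, hC1⟩ := Finite.exists_le (fun ab : X × X => |K ab.1 ab.2|)
  obtain ⟨C2, hC2⟩ := Finite.exists_le (fun a : X => |q a|)
  set C := max C1 C2 with hC
  have hK : ∀ a b, |K a b| ≤ C := fun a b => le_trans (hC1 (a, b)) (le_max_left _ _)
  have hq : ∀ a, |q a| ≤ C := fun a => le_trans (hC2 a) (le_max_right _ _)
  set d := m - k with hd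
  have hdm : k + d = m := by omega
  set z : ℕ → X := fun n => if n ≤ k then y n else y (n + d) with hz
  set w : ℕ → X := fun n => if n ≤ m then y n else y (n - d) with hw
  have hz1 : ∀ n, n ≤ k → z n = y n := by intro n hn; simp only [hz]; rw [if_pos hn]
  have hz2 : ∀ n, k < n → z n = y (n + d) := by intro n hn; simp only [hz]; rw [if_neg (by omega)]
  have hw1 : ∀ n, n ≤ m → w n = y n := by intro n hn; simp only [hw]; rw [if_pos hn]
  have hw2 : ∀ n, m < n → w n = y (n - d) := by intro n hn; simp only [hw]; rw [if_neg (by omega)]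
  -- z and w are admissible paths
  have hz0 : z 0 = x := by rw [hz1 0 (Nat.zero_le _), hy0]
  have hzpath : ∀ j, z (j + 1) ∈ N (z j) := by
    intro j
    rcases lt_trichotomy j k with h | h | h
    · rw [hz1 (j + 1) (by omega), hz1 j (by omega)]
      exact hpath j
    · rw [h, hz2 (k + 1) (by omega), hz1 k le_rfl, heq, show k + 1 + d = m + 1 by omega]
      exact hpath m
    · rw [hz2 (j + 1) (by omega), hz2 j (by omega), show j + 1 + d = (j + d) + 1 by omega]
      exact hpath (j + d)
  have hw0 : w 0 = x := by rw [hw1 0 (Nat.zero_le _), hy0]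
  have hwpath : ∀ j, w (j + 1) ∈ N (w j) := by
    intro j
    rcases lt_trichotomy j m with h | h | h
    · rw [hw1 (j + 1) (by omega), hw1 j (by omega)]
      exact hpath j
    · rw [h, hw2 (m + 1) (by omega), hw1 m le_rfl, ← heq, show m + 1 - d = k + 1 by omega]
      exact hpath k
    · rw [hw2 (j + 1) (by omega), hw2 j (by omega), show j + 1 - d = (j - d) + 1 by omega]
      exact hpath (j - d)
  -- shifted tails
  have hzshift : (fun s => z (k + s)) = (fun s => y (m + s)) := by
    funext s
    rcases Nat.eq_zero_or_pos s with h | h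
    · subst h; simp only [Nat.add_zero]; rw [hz1 k le_rfl]; exact heq
    · rw [hz2 (k + s) (by omega), show k + s + d = m + s by omega]
  have hwshift : (fun s => w (m + s)) = (fun s => y (k + s)) := by
    funext s
    rcases Nat.eq_zero_or_pos s with h | h
    · subst h; simp only [Nat.add_zero]; rw [hw1 m le_rfl]; exact heq.symm
    · rw [hw2 (m + s) (by omega), show m + s - d = k + s by omega]
  -- decompositions
  have Dyk := Jdecomp K q hK hq hp hp1 y k
  have Dym := Jdecomp K q hK hq hp hp1 y m
  have Dz := Jdecomp K q hK hq hp hp1 z k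
  have Dw := Jdecomp K q hK hq hp hp1 w m
  -- prefixes agree
  have hSz : (∑ t ∈ Finset.range k, (1 - p) ^ t * p * pathCost K q z (t + 1)) =
      ∑ t ∈ Finset.range k, (1 - p) ^ t * p * pathCost K q y (t + 1) := by
    apply Finset.sum_congr rfl
    intro t ht
    rw [Finset.mem_range] at ht
    rw [pathCost_congr K q z y (t + 1) (fun j hj => hz1 j (by omega))]
  have hBz : (∑ j ∈ Finset.range k, K (z j) (z (j + 1))) =
      ∑ j ∈ Finset.range k, K (y j) (y (j + 1)) := by
    apply Finset.sum_congr rfl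
    intro j hj
    rw [Finset.mem_range] at hj
    rw [hz1 j (by omega), hz1 (j + 1) (by omega)]
  have hSw : (∑ t ∈ Finset.range m, (1 - p) ^ t * p * pathCost K q w (t + 1)) =
      ∑ t ∈ Finset.range m, (1 - p) ^ t * p * pathCost K q y (t + 1) := by
    apply Finset.sum_congr rfl
    intro t ht
    rw [Finset.mem_range] at ht
    rw [pathCost_congr K q w y (t + 1) (fun j hj => hw1 j (by omega))]
  have hBw : (∑ j ∈ Finset.range m, K (w j) (w (j + 1))) =
      ∑ j ∈ Finset.range m, K (y j) (y (j + 1)) := by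
    apply Finset.sum_congr rfl
    intro j hj
    rw [Finset.mem_range] at hj
    rw [hw1 j (by omega), hw1 (j + 1) (by omega)]
  rw [hSz, hBz, hzshift] at Dz
  rw [hSw, hBw, hwshift] at Dw
  -- minimality
  have h1 := hmin z hz0 hzpath
  have h2 := hmin w hw0 hwpath
  set a := Jcost K q p (fun s => y (k + s)) with ha
  set b := Jcost K q p (fun s => y (m + s)) with hb
  have hpk : (0:ℝ) < (1 - p) ^ k := pow_pos (by linarith) k
  have hpm : (0:ℝ) < (1 - p) ^ m := pow_pos (by linarith) m
  have hab : a = b := by nlinarith [h1, h2, Dyk, Dym, Dz, Dw]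
  show Jcost K q p y = Jcost K q p z
  rw [Dz, Dyk, ← hab]
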